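/- A two-variable quaternionic slice regular polynomial P vanishes at every point (q₁, b) with q₁ ∈ ℍ if and only if P = (q₂ - b) * P₂ for some P₂ ∈ ℍ[q₁,q₂]. -/

import Mathlib

/-- Two-variable quaternionic polynomials `Σ q₁ⁿ q₂ᵐ a_{n,m}`, encoded as polynomials in `q₁`
whose coefficients are polynomials in `q₂`; polynomial multiplication is exactly the
double-convolution `*`-product. -/
abbrev Poly2 : Type := Polynomial (Polynomial (Quaternion ℝ))

/-- Evaluation of a one-variable quaternionic polynomial `Σ qⁿ aₙ` at `q`. -/
noncomputable def qeval (f : Polynomial (Quaternion ℝ)) (q : Quaternion ℝ) : Quaternion ℝ :=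
  f.sum fun n a => q ^ n * a

/-- Evaluation of `P = Σ q₁ⁿ q₂ᵐ a_{n,m}` at a point `(a,b)`:  `Σ aⁿ bᵐ a_{n,m}`. -/
noncomputable def evalPair (P : Poly2) (a b : Quaternion ℝ) : Quaternion ℝ :=
  P.sum fun n p => a ^ n * qeval p b

/-- Regular conjugate of a one-variable quaternionic polynomial. -/
noncomputable def qconj (f : Polynomial (Quaternion ℝ)) : Polynomial (Quaternion ℝ) :=
  ∑ n ∈ f.support, Polynomial.monomial n (star (f.coeff n))

/-- Regular conjugate `P^c` of a two-variable quaternionic polynomial. -/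
noncomputable def conj2 (P : Poly2) : Poly2 :=
  ∑ n ∈ P.support, Polynomial.monomial n (qconj (P.coeff n))

/-- Symmetrization `P^s = P * P^c` of a two-variable quaternionic polynomial. -/
noncomputable def sym2 (P : Poly2) : Poly2 := P * conj2 P

open Polynomial in
/-- `qeval · q` as an additive monoid hom. -/
noncomputable def qevalHom (q : Quaternion ℝ) : Polynomial (Quaternion ℝ) →+ Quaternion ℝ where
  toFun f := qeval f q
  map_zero' := by simp [qeval]
  map_add' f g := Polynomial.sum_add_index f g _ (by simp) (by intros; rw [mul_add])

lemma qeval_add (f g : Polynomial (Quaternion ℝ)) (q : Quaternion ℝ) :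
    qeval (f + g) q = qeval f q + qeval g q := (qevalHom q).map_add f g

lemma qeval_monomial (n : ℕ) (a : Quaternion ℝ) (q : Quaternion ℝ) :
    qeval (Polynomial.monomial n a) q = q ^ n * a :=
  Polynomial.sum_monomial_index a _ (by simp)

open Polynomial in
lemma qeval_left_factor (b : Quaternion ℝ) (g : Polynomial (Quaternion ℝ)) :
    qeval ((X - C b) * g) b = 0 := by
  induction g using Polynomial.induction_on' with
  | add p q hp hq => rw [mul_add, qeval_add, hp, hq, add_zero]
  | monomial n a =>
    have h : (X - C b) * monomial n a = monomial (n + 1) a - monomial n (b * a) := by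
      rw [sub_mul, X_mul_monomial, C_mul_monomial]
    rw [h, show qeval (monomial (n+1) a - monomial n (b*a)) b
        = qevalHom b (monomial (n+1) a - monomial n (b*a)) from rfl, map_sub]
    show qeval (monomial (n+1) a) b - qeval (monomial n (b*a)) b = 0
    rw [qeval_monomial, qeval_monomial, pow_succ, mul_assoc, sub_self]

open Polynomial in
lemma qeval_factor_exists (b : Quaternion ℝ) (f : Polynomial (Quaternion ℝ)) :
    ∃ g, f = (X - C b) * g + C (qeval f b) := by
  induction f using Polynomial.induction_on' with
  | add p q hp hq =>
    obtain ⟨g, hg⟩ := hp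
    obtain ⟨g', hg'⟩ := hq
    refine ⟨g + g', ?_⟩
    rw [qeval_add, C_add, mul_add]
    calc p + q = ((X - C b) * g + C (qeval p b)) + ((X - C b) * g' + C (qeval q b)) := by
          rw [← hg, ← hg']
      _ = (X - C b) * g + (X - C b) * g' + (C (qeval p b) + C (qeval q b)) := by abel
  | monomial n a =>
    refine ⟨(∑ i ∈ Finset.range n, X ^ i * (C b) ^ (n - 1 - i)) * C a, ?_⟩
    rw [qeval_monomial, ← mul_assoc, (commute_X (C b)).mul_geom_sum₂, sub_mul]
    have hC : (C b : Polynomial (Quaternion ℝ)) ^ n = C (b ^ n) := by rw [← map_pow]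
    rw [hC, ← map_mul, X_pow_mul, C_mul_X_pow_eq_monomial, sub_add_cancel]

open Polynomial in
lemma qeval_zero_iff (b : Quaternion ℝ) (f : Polynomial (Quaternion ℝ)) :
    qeval f b = 0 ↔ ∃ g, f = (X - C b) * g := by
  constructor
  · intro h
    obtain ⟨g, hg⟩ := qeval_factor_exists b f
    exact ⟨g, by rw [hg, h, map_zero, add_zero]⟩
  · rintro ⟨g, rfl⟩
    exact qeval_left_factor b g

open Polynomial in
lemma comp_coeff_zero (f : Polynomial (Quaternion ℝ))
    (h : ∀ r : ℝ, qeval f ((r : Quaternion ℝ)) = 0)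
    (φ : Quaternion ℝ →ₗ[ℝ] ℝ) (m : ℕ) : φ (f.coeff m) = 0 := by
  set p : Polynomial ℝ := ∑ n ∈ f.support, monomial n (φ (f.coeff n)) with hp
  have heval : ∀ r : ℝ, p.eval r = φ (qeval f ((r : Quaternion ℝ))) := by
    intro r
    rw [hp, eval_finset_sum]
    have : qeval f ((r : Quaternion ℝ)) = ∑ n ∈ f.support, ((r : Quaternion ℝ)) ^ n * f.coeff n :=
      rfl
    rw [this, map_sum]
    refine Finset.sum_congr rfl fun n _ => ?_
    rw [eval_monomial, ← Quaternion.coe_pow, Quaternion.coe_mul_eq_smul, map_smul,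
      smul_eq_mul, mul_comm]
  have hp0 : p = 0 := by
    apply Polynomial.funext
    intro r
    rw [heval r, h r, map_zero, eval_zero]
  have hc : p.coeff m = φ (f.coeff m) ∨ f.coeff m = 0 := by
    by_cases hm : m ∈ f.support
    · left
      simp only [hp, finset_sum_coeff, coeff_monomial, Finset.sum_ite_eq', if_pos hm]
    · right
      exact Polynomial.notMem_support_iff.mp hm
  rcases hc with hc | hc
  · rw [← hc, hp0, coeff_zero]
  · rw [hc, map_zero]

open Polynomial Quaternion in
lemma qeval_all_real_zero (f : Polynomial (Quaternion ℝ))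
    (h : ∀ r : ℝ, qeval f ((r : Quaternion ℝ)) = 0) : f = 0 := by
  apply Polynomial.ext
  intro m
  have h1 := comp_coeff_zero f h (QuaternionAlgebra.reₗ (-1 : ℝ) 0 (-1) : Quaternion ℝ →ₗ[ℝ] ℝ) m
  have h2 := comp_coeff_zero f h (QuaternionAlgebra.imIₗ (-1 : ℝ) 0 (-1) : Quaternion ℝ →ₗ[ℝ] ℝ) m
  have h3 := comp_coeff_zero f h (QuaternionAlgebra.imJₗ (-1 : ℝ) 0 (-1) : Quaternion ℝ →ₗ[ℝ] ℝ) m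
  have h4 := comp_coeff_zero f h (QuaternionAlgebra.imKₗ (-1 : ℝ) 0 (-1) : Quaternion ℝ →ₗ[ℝ] ℝ) m
  have h1' : (f.coeff m).re = 0 := h1
  have h2' : (f.coeff m).imI = 0 := h2
  have h3' : (f.coeff m).imJ = 0 := h3
  have h4' : (f.coeff m).imK = 0 := h4
  rw [coeff_zero]
  refine QuaternionAlgebra.ext ?_ ?_ ?_ ?_ <;> simp [h1', h2', h3', h4']

theorem vanishing_on_H_times_b_iff_left_factor (P : Poly2) (b : Quaternion ℝ) :
    (∀ q₁ : Quaternion ℝ, evalPair P q₁ b = 0) ↔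
    ∃ P₂ : Poly2, P = Polynomial.C (Polynomial.X - Polynomial.C b) * P₂ := by
  open Polynomial in
  constructor
  · intro h
    -- first show each coefficient evaluates to zero at b
    have key : ∀ n : ℕ, qeval (P.coeff n) b = 0 := by
      set F : Polynomial (Quaternion ℝ) :=
        ∑ n ∈ P.support, monomial n (qeval (P.coeff n) b) with hF
      have hFeval : ∀ a : Quaternion ℝ, qeval F a = evalPair P a b := by
        intro a
        have : qeval F a = ∑ n ∈ P.support, qeval (monomial n (qeval (P.coeff n) b)) a :=
          map_sum (qevalHom a) _ _
        rw [this]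
        refine (Finset.sum_congr rfl fun n _ => by rw [qeval_monomial]).trans ?_
        rfl
      have hF0 : F = 0 := qeval_all_real_zero F fun r => by rw [hFeval, h]
      intro n
      by_cases hn : n ∈ P.support
      · have : F.coeff n = qeval (P.coeff n) b := by
          simp only [hF, finset_sum_coeff, coeff_monomial, Finset.sum_ite_eq', if_pos hn]
        rw [← this, hF0, coeff_zero]
      · rw [Polynomial.notMem_support_iff.mp hn]
        simp [qeval]
    -- now factor each coefficient
    have hfac : ∀ n : ℕ, ∃ g, P.coeff n = (X - C b) * g :=
      fun n => (qeval_zero_iff b (P.coeff n)).mp (key n)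
    choose g hg using hfac
    refine ⟨∑ n ∈ P.support, monomial n (g n), ?_⟩
    rw [Finset.mul_sum]
    conv_lhs => rw [P.as_sum_support]
    refine Finset.sum_congr rfl fun n _ => ?_
    rw [C_mul_monomial, ← hg n]
  · rintro ⟨P₂, rfl⟩ a
    rw [evalPair, Polynomial.sum]
    refine Finset.sum_eq_zero fun n _ => ?_
    rw [coeff_C_mul, qeval_left_factor, mul_zero]
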